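/- Let f : A → B be a Kummer homomorphism of finitely generated commutative monoids (written additively). Then the induced homomorphism f^gp : A^gp → B^gp of Grothendieck groups is injective, and its cokernel B^gp / f^gp(A^gp) is a finite group. -/

import Mathlib

/-! Auxiliary construction: the canonical Grothendieck group of an additive
commutative monoid, as a quotient of `M × M`. -/

section GKConstruction

variable (M : Type*) [AddCommMonoid M]

/-- The Grothendieck-group relation on `M × M`. -/
def gkRel (p q : M × M) : Prop := ∃ k : M, p.1 + q.2 + k = q.1 + p.2 + k

/-- The setoid underlying the Grothendieck group. -/
instance gkSetoid : Setoid (M × M) where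
  r := gkRel M
  iseqv := by
    constructor
    · exact fun p => ⟨0, rfl⟩
    · rintro p q ⟨k, h⟩
      exact ⟨k, h.symm⟩
    · rintro p q r ⟨k, h1⟩ ⟨l, h2⟩
      refine ⟨q.1 + q.2 + k + l, ?_⟩
      have h3 : p.1 + q.2 + k + (q.1 + r.2 + l) = q.1 + p.2 + k + (r.1 + q.2 + l) := by
        rw [h1, h2]
      calc p.1 + r.2 + (q.1 + q.2 + k + l)
          = p.1 + q.2 + k + (q.1 + r.2 + l) := by abel
        _ = q.1 + p.2 + k + (r.1 + q.2 + l) := h3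
        _ = r.1 + p.2 + (q.1 + q.2 + k + l) := by abel

/-- The canonical Grothendieck group of `M`, as a quotient of `M × M`. -/
abbrev GK : Type _ := Quotient (gkSetoid M)

variable {M}

/-- The class of a pair in the Grothendieck group. -/
def GK.mk (p : M × M) : GK M := ⟦p⟧

theorem GK.sound {p q : M × M} (h : gkRel M p q) : GK.mk p = GK.mk q :=
  Quotient.sound h

theorem GK.exact {p q : M × M} (h : GK.mk p = GK.mk q) : gkRel M p q :=
  Quotient.exact h

instance : Zero (GK M) := ⟨GK.mk (0, 0)⟩

instance : Add (GK M) :=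
  ⟨Quotient.map₂ (· + ·) (by
    rintro p p' ⟨k, h1⟩ q q' ⟨l, h2⟩
    refine ⟨k + l, ?_⟩
    have h3 : p.1 + p'.2 + k + (q.1 + q'.2 + l) = p'.1 + p.2 + k + (q'.1 + q.2 + l) := by
      rw [h1, h2]
    simp only [Prod.fst_add, Prod.snd_add]
    calc p.1 + q.1 + (p'.2 + q'.2) + (k + l)
        = p.1 + p'.2 + k + (q.1 + q'.2 + l) := by abel
      _ = p'.1 + p.2 + k + (q'.1 + q.2 + l) := h3
      _ = p'.1 + q'.1 + (p.2 + q.2) + (k + l) := by abel)⟩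

instance : Neg (GK M) :=
  ⟨Quotient.map Prod.swap (by
    rintro p q ⟨k, h⟩
    refine ⟨k, ?_⟩
    show p.2 + q.1 + k = q.2 + p.1 + k
    calc p.2 + q.1 + k = q.1 + p.2 + k := by abel
      _ = p.1 + q.2 + k := h.symm
      _ = q.2 + p.1 + k := by abel)⟩

theorem GK.mk_add (p q : M × M) : GK.mk p + GK.mk q = GK.mk (p + q) := rfl

theorem GK.mk_neg (p : M × M) : -GK.mk p = GK.mk p.swap := rfl

instance : AddCommGroup (GK M) :=
  { AddGroup.ofLeftAxioms
      (fun a b c => Quotient.inductionOn₃ a b c fun p q r =>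
        congrArg GK.mk (add_assoc p q r))
      (fun a => Quotient.inductionOn a fun p =>
        congrArg GK.mk (zero_add p))
      (fun a => Quotient.inductionOn a fun p => by
        show GK.mk (p.swap + p) = GK.mk (0, 0)
        refine GK.sound ⟨0, ?_⟩
        simp only [Prod.fst_add, Prod.snd_add, Prod.fst_swap, Prod.snd_swap]
        abel) with
    add_comm := fun a b => Quotient.inductionOn₂ a b fun p q =>
      congrArg GK.mk (add_comm p q) }

variable (M)

/-- The canonical map `M →+ GK M`. -/
def GK.of : M →+ GK M where
  toFun m := GK.mk (m, 0)
  map_zero' := rfl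
  map_add' x y := by
    show GK.mk (x + y, 0) = GK.mk (x, 0) + GK.mk (y, 0)
    rw [GK.mk_add]
    exact GK.sound ⟨0, by simp⟩

variable {M}

theorem GK.of_cancel {x y : M} (h : GK.of M x = GK.of M y) : ∃ c : M, x + c = y + c := by
  have h' : GK.mk (x, 0) = GK.mk (y, 0) := h
  obtain ⟨k, hk⟩ := GK.exact h'
  exact ⟨k, by simpa using hk⟩

end GKConstruction

section UniversalProperty

universe u

variable {M G : Type u} [AddCommMonoid M] [AddCommGroup G]

theorem gp_closure_range_eq_top (ι : M →+ G)
    (h : ∀ (H : Type u) [AddCommGroup H] (g : M →+ H), ∃! φ : G →+ H, φ.comp ι = g) :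
    AddSubgroup.closure (Set.range ι) = ⊤ := by
  set K := AddSubgroup.closure (Set.range ι) with hK
  have hmem : ∀ m, ι m ∈ K := fun m => AddSubgroup.subset_closure ⟨m, rfl⟩
  let g : M →+ K :=
    { toFun := fun m => ⟨ι m, hmem m⟩
      map_zero' := Subtype.ext (map_zero ι)
      map_add' := fun x y => Subtype.ext (map_add ι x y) }
  obtain ⟨φ, hφ, -⟩ := h K g
  obtain ⟨ψ, -, huniq⟩ := h G ι
  have h1 : (K.subtype.comp φ).comp ι = ι := by
    rw [AddMonoidHom.comp_assoc, hφ]; ext m; rfl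
  have h2 : (AddMonoidHom.id G).comp ι = ι := by ext m; rfl
  have key : K.subtype.comp φ = AddMonoidHom.id G := (huniq _ h1).trans (huniq _ h2).symm
  rw [eq_top_iff]
  intro x _
  have hx : K.subtype (φ x) = x := DFunLike.congr_fun key x
  exact hx ▸ (φ x).2

theorem gp_exists_sub (ι : M →+ G) (htop : AddSubgroup.closure (Set.range ι) = ⊤) (x : G) :
    ∃ a b : M, x = ι a - ι b := by
  let S : AddSubgroup G :=
    { carrier := {x | ∃ a b : M, x = ι a - ι b}
      zero_mem' := ⟨0, 0, by simp⟩
      add_mem' := by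
        rintro x y ⟨a, b, rfl⟩ ⟨c, d, rfl⟩
        exact ⟨a + c, b + d, by rw [map_add, map_add]; abel⟩
      neg_mem' := by
        rintro x ⟨a, b, rfl⟩
        exact ⟨b, a, by abel⟩ }
  have hle : AddSubgroup.closure (Set.range ι) ≤ S := by
    rw [AddSubgroup.closure_le]
    rintro _ ⟨a, rfl⟩
    exact ⟨a, 0, by simp⟩
  exact hle (htop ▸ AddSubgroup.mem_top x)

theorem gp_fg [AddMonoid.FG M] (ι : M →+ G)
    (htop : AddSubgroup.closure (Set.range ι) = ⊤) : AddGroup.FG G := by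
  obtain ⟨S, hS⟩ := (AddMonoid.fg_iff).1 ‹AddMonoid.FG M›
  refine AddGroup.fg_iff.mpr ⟨ι '' S, ?_, hS.2.image ι⟩
  rw [eq_top_iff, ← htop, AddSubgroup.closure_le]
  rintro _ ⟨m, rfl⟩
  have hm : m ∈ AddSubmonoid.closure S := hS.1 ▸ AddSubmonoid.mem_top m
  induction hm using AddSubmonoid.closure_induction with
  | mem x hx => exact AddSubgroup.subset_closure ⟨x, hx, rfl⟩
  | zero => simpa using (AddSubgroup.closure (ι '' S)).zero_mem
  | add x y _ _ hx hy =>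
    rw [map_add]
    exact (AddSubgroup.closure (ι '' S)).add_mem hx hy

end UniversalProperty

/-- If `f : A → B` is a Kummer homomorphism of finitely generated
commutative monoids (written additively), then the induced homomorphism
`f^gp : A^gp → B^gp` of Grothendieck groups (characterized here by their universal
property) is injective and its cokernel `B^gp / f^gp(A^gp)` is a finite group. -/
theorem kummer_gp_injective_finite_cokernel {A B Agp Bgp : Type u}
    [AddCommMonoid A] [AddCommMonoid B] [AddCommGroup Agp] [AddCommGroup Bgp]
    [AddMonoid.FG A] [AddMonoid.FG B]
    (f : A →+ B) (hfinj : Function.Injective f)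
    (hkum : ∀ b : B, ∃ m : ℕ, 0 < m ∧ m • b ∈ Set.range f)
    (ιA : A →+ Agp) (ιB : B →+ Bgp)
    (hAgp : ∀ (G : Type u) [AddCommGroup G] (g : A →+ G), ∃! φ : Agp →+ G, φ.comp ιA = g)
    (hBgp : ∀ (G : Type u) [AddCommGroup G] (g : B →+ G), ∃! φ : Bgp →+ G, φ.comp ιB = g)
    (fgp : Agp →+ Bgp) (hfgp : fgp.comp ιA = ιB.comp f) :
    Function.Injective fgp ∧ Finite (Bgp ⧸ fgp.range) := by
  have hfgp' : ∀ a : A, fgp (ιA a) = ιB (f a) := fun a => DFunLike.congr_fun hfgp a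
  have hAtop := gp_closure_range_eq_top ιA hAgp
  have hBtop := gp_closure_range_eq_top ιB hBgp
  constructor
  · -- injectivity
    rw [injective_iff_map_eq_zero]
    intro x hx
    obtain ⟨a, a', rfl⟩ := gp_exists_sub ιA hAtop x
    rw [map_sub, hfgp', hfgp', sub_eq_zero] at hx
    -- separate in the canonical Grothendieck group of B
    obtain ⟨φ, hφ, -⟩ := hBgp (GK B) (GK.of B)
    have hsep : GK.of B (f a) = GK.of B (f a') := by
      have h1 : φ (ιB (f a)) = GK.of B (f a) := DFunLike.congr_fun hφ (f a)
      have h2 : φ (ιB (f a')) = GK.of B (f a') := DFunLike.congr_fun hφ (f a')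
      rw [← h1, ← h2, hx]
    obtain ⟨c, hc⟩ := GK.of_cancel hsep
    obtain ⟨m, hm, d, hd⟩ := hkum c
    obtain ⟨n, rfl⟩ : ∃ n, m = n + 1 := ⟨m - 1, (Nat.succ_pred_eq_of_pos hm).symm⟩
    have key : ∀ k : ℕ, f a + (k + 1) • c = f a' + (k + 1) • c := by
      intro k
      induction k with
      | zero => simpa using hc
      | succ j ih =>
        rw [succ_nsmul c (j + 1), ← add_assoc, ih, add_assoc]
    have hfd : f (a + d) = f (a' + d) := by
      rw [map_add, map_add, hd]
      exact key n
    have had : a + d = a' + d := hfinj hfd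
    have hsum : ιA a + ιA d = ιA a' + ιA d := by rw [← map_add, ← map_add, had]
    rw [sub_eq_zero]
    exact add_right_cancel hsum
  · -- finiteness of the cokernel
    haveI hBfg : AddGroup.FG Bgp := gp_fg ιB hBtop
    have htor : AddMonoid.IsTorsion (Bgp ⧸ fgp.range) := by
      intro x
      obtain ⟨y, rfl⟩ := QuotientAddGroup.mk_surjective x
      obtain ⟨b, b', rfl⟩ := gp_exists_sub ιB hBtop y
      obtain ⟨m, hm, c, hc⟩ := hkum b
      obtain ⟨m', hm', c', hc'⟩ := hkum b'
      rw [isOfFinAddOrder_iff_nsmul_eq_zero]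
      refine ⟨m * m', Nat.mul_pos hm hm', ?_⟩
      have hmem : (m * m') • (ιB b - ιB b') ∈ fgp.range := by
        refine ⟨ιA (m' • c) - ιA (m • c'), ?_⟩
        rw [map_sub, hfgp', hfgp']
        have e1 : f (m' • c) = (m * m') • b := by
          rw [map_nsmul, hc, smul_smul, mul_comm]
        have e2 : f (m • c') = (m * m') • b' := by
          rw [map_nsmul, hc', smul_smul]
        rw [e1, e2, map_nsmul, map_nsmul, smul_sub]
      rw [← QuotientAddGroup.mk_nsmul]
      exact (QuotientAddGroup.eq_zero_iff _).mpr hmem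
    exact AddCommGroup.finite_of_fg_torsion (Bgp ⧸ fgp.range) htor
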